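/- arXiv:1912.00723 — 2 statements merged into one kernel-verified Lean document; each statement's English description precedes it below -/
import Mathlib

section
/- In the IRL1 setting, assume additionally that the level set {x : F(x) ≤ F(x^0, ε^0)} is bounded, where F(x) = f(x) + λ Σ_{i=1}^n |x_i|^p. Then every iterate x^k lies in this level set (hence the sequence {x^k} is bounded), and there exists a constant C > 0 such that ‖∇Q_k(x^{k+1})‖_∞ ≤ C for all k ∈ ℕ. -/
open Filter Topology

section AuxLemmas

/-- Derivative of a function along a line, expressed with the gradient. -/
lemma aux_hasDerivAt_line {n : ℕ} {f : EuclideanSpace ℝ (Fin n) → ℝ} (hf : Differentiable ℝ f)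
    (x d : EuclideanSpace ℝ (Fin n)) (t : ℝ) :
    HasDerivAt (fun s : ℝ => f (x + s • d)) (inner ℝ (gradient f (x + t • d)) d : ℝ) t := by
  have hline : HasDerivAt (fun s : ℝ => x + s • d) d t := by
    simpa using ((hasDerivAt_id t).smul_const d).const_add x
  have hF := ((hf (x + t • d)).hasGradientAt.hasFDerivAt).comp_hasDerivAt t hline
  exact hF.congr_deriv (by simp [gradient, InnerProductSpace.toDual_apply_apply])

/-- One-dimensional descent lemma. -/
lemma aux_descent1D {g g' : ℝ → ℝ} {K : ℝ}
    (hg : ∀ t, HasDerivAt g (g' t) t)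
    (hlip : ∀ t ∈ Set.Icc (0:ℝ) 1, g' t - g' 0 ≤ K * t) :
    g 1 ≤ g 0 + g' 0 + K / 2 := by
  set h : ℝ → ℝ := fun t => g t - t * g' 0 - K / 2 * t ^ 2 with hh
  have hd : ∀ t, HasDerivAt h (g' t - g' 0 - K * t) t := by
    intro t
    have h1 : HasDerivAt (fun t : ℝ => t * g' 0) (g' 0) t := by
      simpa using (hasDerivAt_id t).mul_const (g' 0)
    have h2 : HasDerivAt (fun t : ℝ => K / 2 * t ^ 2) (K * t) t := by
      have := (hasDerivAt_pow 2 t).const_mul (K / 2)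
      exact this.congr_deriv (by norm_num; ring)
    exact ((hg t).sub h1).sub h2
  have hanti : AntitoneOn h (Set.Icc 0 1) := by
    apply antitoneOn_of_deriv_nonpos (convex_Icc 0 1)
    · exact fun t _ => ((hd t).continuousAt).continuousWithinAt
    · exact fun t _ => ((hd t).differentiableAt).differentiableWithinAt
    · intro t ht
      rw [interior_Icc] at ht
      rw [(hd t).deriv]
      have := hlip t ⟨ht.1.le, ht.2.le⟩
      linarith
  have := hanti (Set.left_mem_Icc.2 zero_le_one) (Set.right_mem_Icc.2 zero_le_one) zero_le_one
  simp only [hh] at this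
  nlinarith [this]

/-- Descent lemma for a function with Lipschitz gradient. -/
lemma aux_descent_lemma {n : ℕ} {f : EuclideanSpace ℝ (Fin n) → ℝ} (hf : Differentiable ℝ f)
    {K : ℝ} (hlip : ∀ a b, ‖gradient f a - gradient f b‖ ≤ K * ‖a - b‖)
    (x y : EuclideanSpace ℝ (Fin n)) :
    f y ≤ f x + inner ℝ (gradient f x) (y - x) + K * ‖y - x‖ ^ 2 / 2 := by
  set d := y - x with hd
  have key := aux_descent1D (g := fun s : ℝ => f (x + s • d))
    (g' := fun t : ℝ => (inner ℝ (gradient f (x + t • d)) d : ℝ))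
    (K := K * ‖d‖ ^ 2)
    (fun t => aux_hasDerivAt_line hf x d t) ?_
  · have h0 : x + (0:ℝ) • d = x := by simp
    have h1 : x + (1:ℝ) • d = y := by simp [hd]
    simp only [h0, h1] at key
    linarith [key]
  · intro t ht
    have h0 : x + (0:ℝ) • d = x := by simp
    show (inner ℝ (gradient f (x + t • d)) d : ℝ) - inner ℝ (gradient f (x + (0:ℝ) • d)) d
      ≤ K * ‖d‖ ^ 2 * t
    rw [h0]
    have : (inner ℝ (gradient f (x + t • d)) d : ℝ) - inner ℝ (gradient f x) d
        = inner ℝ (gradient f (x + t • d) - gradient f x) d := by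
      rw [inner_sub_left]
    rw [this]
    calc (inner ℝ (gradient f (x + t • d) - gradient f x) d : ℝ)
        ≤ ‖gradient f (x + t • d) - gradient f x‖ * ‖d‖ := real_inner_le_norm _ _
      _ ≤ (K * ‖x + t • d - x‖) * ‖d‖ := by
          apply mul_le_mul_of_nonneg_right (hlip _ _) (norm_nonneg _)
      _ = K * t * ‖d‖ ^ 2 := by
          rw [show x + t • d - x = t • d by abel, norm_smul]
          simp [abs_of_nonneg ht.1]
          ring
      _ = K * ‖d‖ ^ 2 * t := by ring

/-- First-order lower bound for an `M`-strongly convex differentiable function. -/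
lemma aux_sconv_lb {n : ℕ} {Q : EuclideanSpace ℝ (Fin n) → ℝ} (hQ : Differentiable ℝ Q) {M : ℝ}
    (hc : ConvexOn ℝ Set.univ (fun z => Q z - M / 2 * ‖z‖ ^ 2))
    (x y : EuclideanSpace ℝ (Fin n)) :
    Q x + inner ℝ (gradient Q x) (y - x) + M / 2 * ‖y - x‖ ^ 2 ≤ Q y := by
  set d := y - x with hd
  set χ : ℝ → ℝ := fun t => Q (x + t • d) - M / 2 * ‖x + t • d‖ ^ 2 with hχ
  have hconv : ConvexOn ℝ Set.univ χ := by
    have h := hc.comp_affineMap (AffineMap.lineMap x y : ℝ →ᵃ[ℝ] EuclideanSpace ℝ (Fin n))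
    have heq : ((fun z => Q z - M / 2 * ‖z‖ ^ 2) ∘
        (AffineMap.lineMap x y : ℝ →ᵃ[ℝ] EuclideanSpace ℝ (Fin n))) = χ := by
      funext t
      have hl : (AffineMap.lineMap x y : ℝ →ᵃ[ℝ] EuclideanSpace ℝ (Fin n)) t = x + t • d := by
        rw [AffineMap.lineMap_apply, hd, vsub_eq_sub, vadd_eq_add, add_comm]
      simp only [Function.comp_apply, hl, hχ]
    rw [Set.preimage_univ] at h
    rwa [heq] at h
  have hder : ∀ t, HasDerivAt χ
      ((inner ℝ (gradient Q (x + t • d)) d : ℝ) - M / 2 * (2 * (inner ℝ (x + t • d) d : ℝ))) t := by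
    intro t
    apply HasDerivAt.sub (aux_hasDerivAt_line hQ x d t)
    have hn : HasDerivAt (fun s : ℝ => ‖x + s • d‖ ^ 2) (2 * (inner ℝ (x + t • d) d : ℝ)) t := by
      have h2 : ∀ s : ℝ, ‖x + s • d‖ ^ 2 = (inner ℝ (x + s • d) (x + s • d) : ℝ) := fun s =>
        (real_inner_self_eq_norm_sq _).symm
      simp only [h2]
      have hline : HasDerivAt (fun s : ℝ => x + s • d) d t := by
        simpa using ((hasDerivAt_id t).smul_const d).const_add x
      have := (hline.inner ℝ hline)
      exact this.congr_deriv (by rw [real_inner_comm (x + t • d) d]; ring)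
    have := hn.const_mul (M / 2)
    convert this using 1
  have key := hconv.le_slope_of_hasDerivAt (Set.mem_univ (0:ℝ)) (Set.mem_univ (1:ℝ))
    zero_lt_one (hder 0)
  have h0 : x + (0:ℝ) • d = x := by simp
  have h1 : x + (1:ℝ) • d = y := by simp [hd]
  rw [slope_def_field] at key
  simp only [hχ, h0, h1] at key
  have hexp : ‖y‖ ^ 2 = ‖x‖ ^ 2 + 2 * (inner ℝ x d : ℝ) + ‖d‖ ^ 2 := by
    have : y = x + d := by rw [hd]; abel
    rw [this]
    rw [← real_inner_self_eq_norm_sq, ← real_inner_self_eq_norm_sq, ← real_inner_self_eq_norm_sq]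
    rw [real_inner_add_add_self]
  simp only [sub_zero, div_one] at key
  rw [hexp] at key
  nlinarith [key]

/-- Tangent-line (concavity) inequality for `rpow` with exponent in `[0,1]`. -/
lemma aux_rpow_tangent {x y p : ℝ} (hx : 0 < x) (hy : 0 ≤ y) (hp0 : 0 ≤ p) (hp1 : p ≤ 1) :
    y ^ p ≤ x ^ p + p * x ^ (p - 1) * (y - x) := by
  have hs : (-1 : ℝ) ≤ y / x - 1 := by
    have : 0 ≤ y / x := div_nonneg hy hx.le
    linarith
  have hB := rpow_one_add_le_one_add_mul_self hs hp0 hp1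
  rw [show (1 : ℝ) + (y / x - 1) = y / x by ring] at hB
  have hxp : (0:ℝ) < x ^ p := Real.rpow_pos_of_pos hx p
  have hdiv : (y / x) ^ p = y ^ p / x ^ p := Real.div_rpow hy hx.le p
  rw [hdiv] at hB
  have := mul_le_mul_of_nonneg_right hB hxp.le
  rw [div_mul_cancel₀ _ hxp.ne'] at this
  calc y ^ p ≤ (1 + p * (y / x - 1)) * x ^ p := this
    _ = x ^ p + p * (x ^ p / x) * (y - x) := by
        field_simp
    _ = x ^ p + p * x ^ (p - 1) * (y - x) := by
        rw [← Real.rpow_sub_one hx.ne' p]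

/-- Strong minimality: an `M`-strongly convex function exceeds its minimum value by a
quadratic. -/
lemma aux_strong_min {n : ℕ} {G : EuclideanSpace ℝ (Fin n) → ℝ} {M : ℝ}
    (hc : ConvexOn ℝ Set.univ (fun z => G z - M / 2 * ‖z‖ ^ 2))
    {xs : EuclideanSpace ℝ (Fin n)} (hmin : ∀ z, G xs ≤ G z) (z : EuclideanSpace ℝ (Fin n)) :
    G xs + M / 2 * ‖z - xs‖ ^ 2 ≤ G z := by
  have key : ∀ t : ℝ, t ∈ Set.Ioo (0:ℝ) 1 →
      M / 2 * ((1 - t) * ‖z - xs‖ ^ 2) ≤ G z - G xs := by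
    intro t ht
    obtain ⟨ht0, ht1⟩ := ht
    have hcomb := hc.2 (Set.mem_univ xs) (Set.mem_univ z)
      (by linarith : (0:ℝ) ≤ 1 - t) ht0.le (by ring)
    have hmm := hmin ((1 - t) • xs + t • z)
    have hid : (1 - t) * ‖xs‖ ^ 2 + t * ‖z‖ ^ 2 - ‖(1 - t) • xs + t • z‖ ^ 2
        = t * (1 - t) * ‖z - xs‖ ^ 2 := by
      simp only [← real_inner_self_eq_norm_sq, inner_add_left, inner_add_right,
        inner_sub_left, inner_sub_right, real_inner_smul_left, real_inner_smul_right]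
      rw [real_inner_comm xs z]
      ring
    have heq : M / 2 * ((1 - t) * ‖xs‖ ^ 2 + t * ‖z‖ ^ 2 - ‖(1 - t) • xs + t • z‖ ^ 2)
        = M / 2 * (t * (1 - t) * ‖z - xs‖ ^ 2) := by rw [hid]
    simp only [smul_eq_mul] at hcomb
    have h2 : G xs ≤ (1 - t) * G xs + t * G z - M / 2 * (t * (1 - t) * ‖z - xs‖ ^ 2) := by
      nlinarith [hcomb, hmm, heq]
    have h3 : M / 2 * (t * (1 - t) * ‖z - xs‖ ^ 2) ≤ t * (G z - G xs) := by nlinarith [h2]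
    nlinarith [h3, ht0]
  have hten : Filter.Tendsto (fun t : ℝ => M / 2 * ((1 - t) * ‖z - xs‖ ^ 2)) (nhdsWithin 0 (Set.Ioi 0))
      (nhds (M / 2 * ((1 - 0) * ‖z - xs‖ ^ 2))) := by
    apply Filter.Tendsto.mono_left _ nhdsWithin_le_nhds
    exact (Continuous.tendsto (by continuity) 0)
  have hle : M / 2 * ((1 - 0) * ‖z - xs‖ ^ 2) ≤ G z - G xs := by
    apply le_of_tendsto hten
    filter_upwards [Ioo_mem_nhdsGT_of_mem (Set.mem_Ico.2 ⟨le_refl 0, zero_lt_one⟩)] with t ht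
    exact key t ht
  simp only [sub_zero, one_mul] at hle ⊢
  linarith

/-- Each coordinate of a Euclidean vector is bounded by its norm. -/
lemma aux_abs_coord_le_norm {n : ℕ} (v : EuclideanSpace ℝ (Fin n)) (i : Fin n) : |v i| ≤ ‖v‖ := by
  rw [show |v i| = Real.sqrt ((v i) ^ 2) from (Real.sqrt_sq_eq_abs _).symm,
    EuclideanSpace.norm_eq]
  apply Real.sqrt_le_sqrt
  rw [show (v i) ^ 2 = ‖v i‖ ^ 2 by rw [Real.norm_eq_abs, sq_abs]]
  exact Finset.single_le_sum (f := fun j => ‖v j‖ ^ 2) (fun j _ => sq_nonneg _)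
    (Finset.mem_univ i)

/-- Weighted sums of coordinate absolute values are convex. -/
lemma aux_convexOn_weighted_abs {n : ℕ} (c : Fin n → ℝ) (hc : ∀ i, 0 ≤ c i) :
    ConvexOn ℝ Set.univ (fun z : EuclideanSpace ℝ (Fin n) => ∑ i, c i * |z i|) := by
  refine ⟨convex_univ, ?_⟩
  intro x _ y _ a b ha hb hab
  simp only [smul_eq_mul]
  rw [Finset.mul_sum, Finset.mul_sum, ← Finset.sum_add_distrib]
  apply Finset.sum_le_sum
  intro i _
  have happ : (a • x + b • y) i = a * x i + b * y i := rfl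
  rw [happ]
  calc c i * |a * x i + b * y i| ≤ c i * (a * |x i| + b * |y i|) := by
        apply mul_le_mul_of_nonneg_left _ (hc i)
        calc |a * x i + b * y i| ≤ |a * x i| + |b * y i| := abs_add_le _ _
          _ = a * |x i| + b * |y i| := by
              rw [abs_mul, abs_mul, abs_of_nonneg ha, abs_of_nonneg hb]
    _ = a * (c i * |x i|) + b * (c i * |y i|) := by ring

end AuxLemmas

/-- The weight function `w(t, s) = p(|t| + s)^(p-1)`. -/
noncomputable def wfun (p t s : ℝ) : ℝ := p * (|t| + s) ^ (p - 1)

/-- The IRL1 setting (Algorithm 2.1 of the paper): fixed data `p ∈ (0,1)`, `λ > 0`,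
`μ ∈ (0,1)`, a differentiable `f` with `Lf`-Lipschitz gradient (`Lf ≥ 0`), iterates
`x^k`, positive parameters `ε^k` with `ε^{k+1} ≤ μ ε^k` componentwise, and for each `k`
a differentiable model `Q_k` with `∇Q_k(x^k) = ∇f(x^k)`, `M`-strongly convex with
`M > Lf/2` (strong convexity meaning `z ↦ Q_k z - (M/2)‖z‖²` is convex), `∇Q_k`
`L`-Lipschitz, such that `x^{k+1}` is a global minimizer of
`G(·; x^k, ε^k) = Q_k(·) + λ Σᵢ w(xᵢ^k, εᵢ^k)|·ᵢ|`. -/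
structure IRL1 (n : ℕ) where
  p : ℝ
  lam : ℝ
  mu : ℝ
  Lf : ℝ
  M : ℝ
  L : ℝ
  f : EuclideanSpace ℝ (Fin n) → ℝ
  x : ℕ → EuclideanSpace ℝ (Fin n)
  eps : ℕ → Fin n → ℝ
  Q : ℕ → EuclideanSpace ℝ (Fin n) → ℝ
  hp0 : 0 < p
  hp1 : p < 1
  hlam : 0 < lam
  hmu0 : 0 < mu
  hmu1 : mu < 1
  hLf : 0 ≤ Lf
  hM : Lf / 2 < M
  hf_diff : Differentiable ℝ f
  hf_lip : ∀ a b, ‖gradient f a - gradient f b‖ ≤ Lf * ‖a - b‖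
  heps_pos : ∀ k i, 0 < eps k i
  heps_dec : ∀ k i, eps (k + 1) i ≤ mu * eps k i
  hQ_diff : ∀ k, Differentiable ℝ (Q k)
  hQ_grad : ∀ k, gradient (Q k) (x k) = gradient f (x k)
  hQ_sconv : ∀ k, ConvexOn ℝ Set.univ (fun z => Q k z - M / 2 * ‖z‖ ^ 2)
  hQ_lip : ∀ k a b, ‖gradient (Q k) a - gradient (Q k) b‖ ≤ L * ‖a - b‖
  hmin : ∀ k, ∀ z : EuclideanSpace ℝ (Fin n),
    Q k (x (k + 1)) + lam * ∑ i, wfun p (x k i) (eps k i) * |x (k + 1) i|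
      ≤ Q k z + lam * ∑ i, wfun p (x k i) (eps k i) * |z i|

/-- The smoothed objective `F(x, ε) = f(x) + λ Σᵢ (|xᵢ| + εᵢ)^p`. -/
noncomputable def IRL1.Feps {n : ℕ} (S : IRL1 n)
    (z : EuclideanSpace ℝ (Fin n)) (e : Fin n → ℝ) : ℝ :=
  S.f z + S.lam * ∑ i, (|z i| + e i) ^ S.p

/-- The objective `F(x) = f(x) + λ Σᵢ |xᵢ|^p`. -/
noncomputable def IRL1.Fobj {n : ℕ} (S : IRL1 n) (z : EuclideanSpace ℝ (Fin n)) : ℝ :=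
  S.f z + S.lam * ∑ i, |z i| ^ S.p

/-- The subproblem objective `G(z; x^k, ε^k)`. -/
noncomputable def IRL1.G {n : ℕ} (S : IRL1 n) (k : ℕ)
    (z : EuclideanSpace ℝ (Fin n)) : ℝ :=
  S.Q k z + S.lam * ∑ i, wfun S.p (S.x k i) (S.eps k i) * |z i|

/-- The level set `{x : F(x) ≤ F(x⁰, ε⁰)}` is bounded. -/
def IRL1.LevelBounded {n : ℕ} (S : IRL1 n) : Prop :=
  Bornology.IsBounded {z : EuclideanSpace ℝ (Fin n) | S.Fobj z ≤ S.Feps (S.x 0) (S.eps 0)}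

/-- In the IRL1 setting with bounded level set, every iterate `x^k`
lies in the level set `{x : F(x) ≤ F(x⁰, ε⁰)}`, and there exists `C > 0` with
`‖∇Q_k(x^{k+1})‖_∞ ≤ C` for all `k`. -/
theorem stmt6 {n : ℕ} (S : IRL1 n) (hbdd : S.LevelBounded) :
    (∀ k : ℕ, S.Fobj (S.x k) ≤ S.Feps (S.x 0) (S.eps 0)) ∧
    ∃ C > (0 : ℝ), ∀ (k : ℕ) (i : Fin n), |gradient (S.Q k) (S.x (k + 1)) i| ≤ C := by
  classical
  have hM0 : 0 < S.M := lt_of_le_of_lt (by linarith [S.hLf] : (0:ℝ) ≤ S.Lf / 2) S.hM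
  have hw : ∀ k i, 0 < wfun S.p (S.x k i) (S.eps k i) := by
    intro k i
    have hbase : 0 < |S.x k i| + S.eps k i :=
      add_pos_of_nonneg_of_pos (abs_nonneg _) (S.heps_pos k i)
    exact mul_pos S.hp0 (Real.rpow_pos_of_pos hbase _)
  -- one-step decrease of `f + λ Σ w |·|`
  have hstep : ∀ k,
      S.f (S.x (k+1)) + S.lam * ∑ i, wfun S.p (S.x k i) (S.eps k i) * |S.x (k+1) i|
        ≤ S.f (S.x k) + S.lam * ∑ i, wfun S.p (S.x k i) (S.eps k i) * |S.x k i| := by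
    intro k
    have h1 := aux_descent_lemma S.hf_diff S.hf_lip (S.x k) (S.x (k+1))
    have h2 := aux_sconv_lb (S.hQ_diff k) (S.hQ_sconv k) (S.x k) (S.x (k+1))
    have hGc : ConvexOn ℝ Set.univ (fun z => S.G k z - S.M / 2 * ‖z‖ ^ 2) := by
      have hconv2 := aux_convexOn_weighted_abs
        (fun i => S.lam * wfun S.p (S.x k i) (S.eps k i))
        (fun i => (mul_pos S.hlam (hw k i)).le)
      have hadd := (S.hQ_sconv k).add hconv2
      have heq : (fun z : EuclideanSpace ℝ (Fin n) => S.G k z - S.M / 2 * ‖z‖ ^ 2)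
          = fun z => (S.Q k z - S.M / 2 * ‖z‖ ^ 2)
            + ∑ i, (S.lam * wfun S.p (S.x k i) (S.eps k i)) * |z i| := by
        funext z
        simp only [IRL1.G, Finset.mul_sum, mul_assoc]
        ring
      rw [heq]
      exact hadd
    have h3 := aux_strong_min hGc (fun z => S.hmin k z) (S.x k)
    simp only [IRL1.G] at h3
    rw [norm_sub_rev] at h3
    rw [S.hQ_grad k] at h2
    have hd2 : (0:ℝ) ≤ ‖S.x (k+1) - S.x k‖ ^ 2 := sq_nonneg _
    have h4 : S.Lf / 2 * ‖S.x (k+1) - S.x k‖ ^ 2 ≤ S.M * ‖S.x (k+1) - S.x k‖ ^ 2 :=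
      mul_le_mul_of_nonneg_right S.hM.le hd2
    linarith [h1, h2, h3, h4]
  -- decrease of the smoothed objective in x
  have hsum1 : ∀ k, S.Feps (S.x (k+1)) (S.eps k) ≤ S.Feps (S.x k) (S.eps k) := by
    intro k
    have hpt : ∀ i ∈ Finset.univ, (|S.x (k+1) i| + S.eps k i) ^ S.p
        ≤ (|S.x k i| + S.eps k i) ^ S.p
          + wfun S.p (S.x k i) (S.eps k i) * (|S.x (k+1) i| - |S.x k i|) := by
      intro i _
      have hx0 : 0 < |S.x k i| + S.eps k i :=
        add_pos_of_nonneg_of_pos (abs_nonneg _) (S.heps_pos k i)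
      have hy0 : 0 ≤ |S.x (k+1) i| + S.eps k i :=
        add_nonneg (abs_nonneg _) (S.heps_pos k i).le
      have hT := aux_rpow_tangent hx0 hy0 S.hp0.le S.hp1.le
      calc (|S.x (k+1) i| + S.eps k i) ^ S.p
          ≤ (|S.x k i| + S.eps k i) ^ S.p + S.p * (|S.x k i| + S.eps k i) ^ (S.p - 1)
            * ((|S.x (k+1) i| + S.eps k i) - (|S.x k i| + S.eps k i)) := hT
        _ = (|S.x k i| + S.eps k i) ^ S.p
            + wfun S.p (S.x k i) (S.eps k i) * (|S.x (k+1) i| - |S.x k i|) := by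
            rw [wfun]; ring
    have hsum := Finset.sum_le_sum hpt
    rw [Finset.sum_add_distrib] at hsum
    have hsplit : ∑ i, wfun S.p (S.x k i) (S.eps k i) * (|S.x (k+1) i| - |S.x k i|)
        = (∑ i, wfun S.p (S.x k i) (S.eps k i) * |S.x (k+1) i|)
          - ∑ i, wfun S.p (S.x k i) (S.eps k i) * |S.x k i| := by
      rw [← Finset.sum_sub_distrib]
      exact Finset.sum_congr rfl fun i _ => by ring
    rw [hsplit] at hsum
    have hmul := mul_le_mul_of_nonneg_left hsum S.hlam.le
    have hkey := hstep k
    simp only [IRL1.Feps]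
    nlinarith [hmul, hkey]
  -- decrease of the smoothed objective in ε
  have hsum2 : ∀ k, S.Feps (S.x (k+1)) (S.eps (k+1)) ≤ S.Feps (S.x (k+1)) (S.eps k) := by
    intro k
    simp only [IRL1.Feps]
    have hpt : ∀ i ∈ Finset.univ, (|S.x (k+1) i| + S.eps (k+1) i) ^ S.p
        ≤ (|S.x (k+1) i| + S.eps k i) ^ S.p := by
      intro i _
      apply Real.rpow_le_rpow (add_nonneg (abs_nonneg _) (S.heps_pos (k+1) i).le) _ S.hp0.le
      have h1 := S.heps_dec k i
      have h2 : S.mu * S.eps k i ≤ S.eps k i :=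
        mul_le_of_le_one_left (S.heps_pos k i).le S.hmu1.le
      linarith
    have := mul_le_mul_of_nonneg_left (Finset.sum_le_sum hpt) S.hlam.le
    linarith
  -- F(x^k) ≤ F(x^k, ε^k)
  have hobj : ∀ k, S.Fobj (S.x k) ≤ S.Feps (S.x k) (S.eps k) := by
    intro k
    simp only [IRL1.Fobj, IRL1.Feps]
    have hpt : ∀ i ∈ Finset.univ, |S.x k i| ^ S.p ≤ (|S.x k i| + S.eps k i) ^ S.p := by
      intro i _
      exact Real.rpow_le_rpow (abs_nonneg _)
        (le_add_of_nonneg_right (S.heps_pos k i).le) S.hp0.le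
    have := mul_le_mul_of_nonneg_left (Finset.sum_le_sum hpt) S.hlam.le
    linarith
  -- main monotonicity
  have hmain : ∀ k, S.Feps (S.x k) (S.eps k) ≤ S.Feps (S.x 0) (S.eps 0) := by
    intro k
    induction k with
    | zero => exact le_refl _
    | succ k ih => exact ((hsum2 k).trans (hsum1 k)).trans ih
  have part1 : ∀ k : ℕ, S.Fobj (S.x k) ≤ S.Feps (S.x 0) (S.eps 0) :=
    fun k => (hobj k).trans (hmain k)
  refine ⟨part1, ?_⟩
  -- boundedness
  obtain ⟨R, hR⟩ := hbdd.subset_closedBall 0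
  have hxk : ∀ k, ‖S.x k‖ ≤ R := by
    intro k
    have hm : S.x k ∈ {z : EuclideanSpace ℝ (Fin n) | S.Fobj z ≤ S.Feps (S.x 0) (S.eps 0)} :=
      part1 k
    have := hR hm
    rwa [Metric.mem_closedBall, dist_zero_right] at this
  have hR0 : 0 ≤ R := le_trans (norm_nonneg _) (hxk 0)
  set g0 := ‖gradient S.f 0‖ with hg0
  refine ⟨|S.L| * (2 * R) + S.Lf * R + g0 + 1, ?_, ?_⟩
  · have t1 : 0 ≤ |S.L| * (2 * R) := mul_nonneg (abs_nonneg _) (by linarith)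
    have t2 : 0 ≤ S.Lf * R := mul_nonneg S.hLf hR0
    have t3 : 0 ≤ g0 := norm_nonneg _
    linarith
  · intro k i
    have hb1 : ‖gradient (S.Q k) (S.x (k+1)) - gradient (S.Q k) (S.x k)‖ ≤ |S.L| * (2 * R) := by
      calc ‖gradient (S.Q k) (S.x (k+1)) - gradient (S.Q k) (S.x k)‖
          ≤ S.L * ‖S.x (k+1) - S.x k‖ := S.hQ_lip k _ _
        _ ≤ |S.L| * ‖S.x (k+1) - S.x k‖ :=
            mul_le_mul_of_nonneg_right (le_abs_self _) (norm_nonneg _)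
        _ ≤ |S.L| * (2 * R) := by
            apply mul_le_mul_of_nonneg_left _ (abs_nonneg _)
            calc ‖S.x (k+1) - S.x k‖ ≤ ‖S.x (k+1)‖ + ‖S.x k‖ := norm_sub_le _ _
              _ ≤ 2 * R := by linarith [hxk (k+1), hxk k]
    have hb2 : ‖gradient (S.Q k) (S.x k)‖ ≤ S.Lf * R + g0 := by
      rw [S.hQ_grad k]
      have ht : ‖gradient S.f (S.x k)‖ ≤ ‖gradient S.f (S.x k) - gradient S.f 0‖ + g0 := by
        have := norm_add_le (gradient S.f (S.x k) - gradient S.f 0) (gradient S.f 0)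
        simpa [hg0] using this
      have hl := S.hf_lip (S.x k) 0
      rw [sub_zero] at hl
      have := mul_le_mul_of_nonneg_left (hxk k) S.hLf
      linarith
    calc |gradient (S.Q k) (S.x (k + 1)) i| ≤ ‖gradient (S.Q k) (S.x (k+1))‖ :=
        aux_abs_coord_le_norm _ i
      _ ≤ ‖gradient (S.Q k) (S.x (k+1)) - gradient (S.Q k) (S.x k)‖
          + ‖gradient (S.Q k) (S.x k)‖ := by
          have := norm_add_le (gradient (S.Q k) (S.x (k+1)) - gradient (S.Q k) (S.x k))
            (gradient (S.Q k) (S.x k))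
          simpa using this
      _ ≤ |S.L| * (2 * R) + S.Lf * R + g0 + 1 := by linarith
end

section
/- In the IRL1 setting with level-set boundedness, there exist disjoint index sets I* and A* with I* ∪ A* = {1, …, n} and an integer k̄ such that for every k > k̄, {i : x_i^k ≠ 0} = I* and {i : x_i^k = 0} = A*; i.e., the support of the iterates is eventually constant. -/
open Filter Topology

section Aux

variable {E : Type*} [NormedAddCommGroup E] [InnerProductSpace ℝ E] [CompleteSpace E]

local notation "⟪" x ", " y "⟫" => @inner ℝ _ _ x y

lemma inner_gradient_eq_fderiv' (f : E → ℝ) (x d : E) :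
    ⟪gradient f x, d⟫ = fderiv ℝ f x d :=
  InnerProductSpace.toDual_symm_apply

lemma hasDerivAt_line (f : E → ℝ) (hf : Differentiable ℝ f) (a d : E) (t : ℝ) :
    HasDerivAt (fun s : ℝ => f (a + s • d)) ⟪gradient f (a + t • d), d⟫ t := by
  have h2 : HasDerivAt (fun s : ℝ => a + s • d) d t := by
    simpa using ((hasDerivAt_id t).smul_const d).const_add a
  have := (hf (a + t • d)).hasFDerivAt.comp_hasDerivAt t h2
  rw [inner_gradient_eq_fderiv' f (a + t • d) d]; exact this

lemma gradient_continuous {f : E → ℝ} {Lf : ℝ}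
    (hlip : ∀ a b, ‖gradient f a - gradient f b‖ ≤ Lf * ‖a - b‖) :
    Continuous (gradient f) := by
  have : LipschitzWith Lf.toNNReal (gradient f) := by
    apply LipschitzWith.of_dist_le_mul
    intro a b
    rw [dist_eq_norm, dist_eq_norm]
    exact (hlip a b).trans (by gcongr; exact Real.le_coe_toNNReal Lf)
  exact this.continuous

/-- The descent lemma with the sharp factor `Lf/2`. -/
lemma descent_lemma {f : E → ℝ} (hf : Differentiable ℝ f) {Lf : ℝ}
    (hlip : ∀ a b, ‖gradient f a - gradient f b‖ ≤ Lf * ‖a - b‖) (a b : E) :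
    f b ≤ f a + ⟪gradient f a, b - a⟫ + Lf / 2 * ‖b - a‖ ^ 2 := by
  set d := b - a with hd
  set g' : ℝ → ℝ := fun t => ⟪gradient f (a + t • d), d⟫ with hg'
  have hcont : Continuous g' := by
    exact (Continuous.inner ((gradient_continuous hlip).comp (by continuity)) continuous_const)
  have hftc : ∫ t in (0:ℝ)..1, g' t = f (a + (1:ℝ) • d) - f (a + (0:ℝ) • d) := by
    have : ∀ t ∈ Set.uIcc (0:ℝ) 1, HasDerivAt (fun s : ℝ => f (a + s • d)) (g' t) t :=
      fun t _ => hasDerivAt_line f hf a d t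
    exact intervalIntegral.integral_eq_sub_of_hasDerivAt this (hcont.intervalIntegrable 0 1)
  have hab : a + (1:ℝ) • d = b := by simp [hd]
  have ha0 : a + (0:ℝ) • d = a := by simp
  rw [hab, ha0] at hftc
  have hbound : ∀ t ∈ Set.Icc (0:ℝ) 1, g' t ≤ g' 0 + Lf * ‖d‖ ^ 2 * t := by
    intro t ht
    have h1 : g' t - g' 0 = ⟪gradient f (a + t • d) - gradient f (a + (0:ℝ) • d), d⟫ := by
      rw [inner_sub_left]
    have h2 : g' t - g' 0 ≤ Lf * ‖d‖ ^ 2 * t := by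
      rw [h1]
      calc ⟪gradient f (a + t • d) - gradient f (a + (0:ℝ) • d), d⟫
          ≤ ‖gradient f (a + t • d) - gradient f (a + (0:ℝ) • d)‖ * ‖d‖ := real_inner_le_norm _ _
        _ ≤ (Lf * ‖(a + t • d) - (a + (0:ℝ) • d)‖) * ‖d‖ := by
            gcongr; exact hlip _ _
        _ = Lf * ‖d‖ ^ 2 * t := by
            have : (a + t • d) - (a + (0:ℝ) • d) = t • d := by module
            rw [this, norm_smul, Real.norm_eq_abs, abs_of_nonneg ht.1]; ring
    linarith
  have hint : ∫ t in (0:ℝ)..1, g' t ≤ ∫ t in (0:ℝ)..1, (g' 0 + Lf * ‖d‖ ^ 2 * t) := by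
    apply intervalIntegral.integral_mono_on (by norm_num) (hcont.intervalIntegrable 0 1)
    · exact ((continuous_const.add (continuous_const.mul continuous_id)).intervalIntegrable 0 1)
    · exact hbound
  have hrhs : ∫ t in (0:ℝ)..1, (g' 0 + Lf * ‖d‖ ^ 2 * t) = g' 0 + Lf / 2 * ‖d‖ ^ 2 := by
    have h1 : ∫ t in (0:ℝ)..1, (g' 0 + Lf * ‖d‖ ^ 2 * t)
        = (∫ _t in (0:ℝ)..1, g' 0) + ∫ t in (0:ℝ)..1, Lf * ‖d‖ ^ 2 * t :=
      intervalIntegral.integral_add intervalIntegrable_const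
        ((continuous_const.mul continuous_id).intervalIntegrable 0 1)
    have h2 : ∫ t in (0:ℝ)..1, Lf * ‖d‖ ^ 2 * t = Lf * ‖d‖ ^ 2 * ((1^2 - 0^2)/2) := by
      rw [intervalIntegral.integral_const_mul, integral_id]
    rw [h1, h2, intervalIntegral.integral_const]
    simp
    ring
  have hg0 : g' 0 = ⟪gradient f a, d⟫ := by simp [hg']
  nlinarith [hftc, hint, hrhs]

/-- A differentiable convex function lies above its tangent. -/
lemma convex_tangent_le {h : E → ℝ} (hc : ConvexOn ℝ Set.univ h)
    (hd : Differentiable ℝ h) (a b : E) :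
    h a + ⟪gradient h a, b - a⟫ ≤ h b := by
  set d := b - a with hdd
  set φ : ℝ → ℝ := fun t => h (a + t • d) with hφ
  have hφconv : ConvexOn ℝ Set.univ φ := by
    have := hc.comp_affineMap (AffineMap.lineMap a b)
    have heq : (h ∘ (AffineMap.lineMap a b)) = φ := by
      funext t
      simp [AffineMap.lineMap_apply_module', hφ, hdd, add_comm]
    rw [heq] at this
    simpa using this
  have hder : HasDerivAt φ ⟪gradient h a, d⟫ 0 := by
    have h2 : HasDerivAt (fun s : ℝ => a + s • d) d 0 := by
      simpa using ((hasDerivAt_id (0:ℝ)).smul_const d).const_add a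
    have := (hd (a + (0:ℝ) • d)).hasFDerivAt.comp_hasDerivAt 0 h2
    simp only [zero_smul, add_zero] at this
    rw [inner_gradient_eq_fderiv' h a d]; exact this
  have hslope := hφconv.le_slope_of_hasDerivAt (Set.mem_univ (0:ℝ)) (Set.mem_univ (1:ℝ))
    one_pos hder
  have : slope φ 0 1 = φ 1 - φ 0 := by simp [slope_def_field]
  rw [this] at hslope
  have h1 : φ 1 = h b := by simp [hφ, hdd]
  have h0 : φ 0 = h a := by simp [hφ]
  rw [h1, h0] at hslope
  linarith

/-- Strongly convex differentiable function lies above tangent plus quadratic. -/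
lemma strong_tangent_le {Q : E → ℝ} {M : ℝ}
    (hs : ConvexOn ℝ Set.univ fun z => Q z - M / 2 * ‖z‖ ^ 2)
    (hd : Differentiable ℝ Q) (a b : E) :
    Q a + ⟪gradient Q a, b - a⟫ + M / 2 * ‖b - a‖ ^ 2 ≤ Q b := by
  set h : E → ℝ := fun z => Q z - M / 2 * ‖z‖ ^ 2 with hh
  have hnsq : ∀ z : E, HasFDerivAt (fun w : E => M / 2 * ‖w‖ ^ 2)
      ((M / 2) • (2 • (innerSL ℝ z))) z := fun z =>
    (hasStrictFDerivAt_norm_sq z).hasFDerivAt.const_mul (M / 2)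
  have hdh : ∀ z : E, HasFDerivAt h (fderiv ℝ Q z - (M / 2) • (2 • (innerSL ℝ z))) z :=
    fun z => ((hd z).hasFDerivAt).sub (hnsq z)
  have hdiffh : Differentiable ℝ h := fun z => (hdh z).differentiableAt
  have hgrad : ⟪gradient h a, b - a⟫
      = ⟪gradient Q a, b - a⟫ - M * ⟪a, b - a⟫ := by
    rw [inner_gradient_eq_fderiv' h a (b - a), (hdh a).fderiv,
      inner_gradient_eq_fderiv' Q a (b - a)]
    simp [two_smul]
    ring
  have htan := convex_tangent_le (hh ▸ hs) hdiffh a b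
  rw [hgrad] at htan
  have hb : b = a + (b - a) := by abel
  have hnorm : ‖b‖ ^ 2 = ‖a‖ ^ 2 + 2 * ⟪a, b - a⟫ + ‖b - a‖ ^ 2 := by
    conv_lhs => rw [hb]
    exact norm_add_sq_real a (b - a)
  simp only [hh] at htan
  rw [hnorm] at htan
  ring_nf at htan ⊢
  linarith

/-- Concavity (tangent-line) inequality for `rpow` with exponent in `(0,1)`. -/
lemma rpow_tangent {p a y : ℝ} (hp0 : 0 < p) (hp1 : p < 1) (ha : 0 < a) (hy : 0 ≤ y) :
    y ^ p ≤ a ^ p + p * a ^ (p - 1) * (y - a) := by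
  set s : ℝ := y / a - 1 with hs
  have hs1 : -1 ≤ s := by
    have : 0 ≤ y / a := div_nonneg hy ha.le
    simp [hs]; linarith
  have hb := rpow_one_add_le_one_add_mul_self hs1 hp0.le hp1.le
  have h1s : 1 + s = y / a := by simp [hs]
  rw [h1s] at hb
  have hdiv : (y / a) ^ p = y ^ p / a ^ p := Real.div_rpow hy ha.le p
  rw [hdiv] at hb
  have hap : (0:ℝ) < a ^ p := Real.rpow_pos_of_pos ha p
  have := mul_le_mul_of_nonneg_right hb hap.le
  rw [div_mul_cancel₀ _ hap.ne'] at this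
  calc y ^ p ≤ (1 + p * s) * a ^ p := this
    _ = a ^ p + p * (a ^ p / a) * (y - a) := by
        rw [hs]
        field_simp
    _ = a ^ p + p * a ^ (p - 1) * (y - a) := by
        rw [← Real.rpow_sub_one ha.ne' p]

/-- Quadratic growth around the global minimizer of a strongly convex function. -/
lemma strong_min_growth {G : E → ℝ} {M : ℝ}
    (hsc : StrongConvexOn Set.univ M G) {xs : E} (hmin : ∀ z, G xs ≤ G z) (z : E) :
    G xs + M / 2 * ‖z - xs‖ ^ 2 ≤ G z := by
  set c : ℝ := M / 2 * ‖z - xs‖ ^ 2 with hc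
  have key : ∀ t : ℝ, 0 < t → t ≤ 1 → (1 - t) * c ≤ G z - G xs := by
    intro t ht0 ht1
    have h := hsc.2 (Set.mem_univ z) (Set.mem_univ xs) (show (0:ℝ) ≤ t from ht0.le)
      (show (0:ℝ) ≤ 1 - t by linarith) (show t + (1 - t) = 1 by ring)
    simp only [smul_eq_mul] at h
    have h2 := hmin (t • z + (1 - t) • xs)
    have h3 : G xs ≤ t * G z + (1 - t) * G xs - t * (1 - t) * (M / 2 * ‖z - xs‖ ^ 2) := by
      calc G xs ≤ G (t • z + (1 - t) • xs) := h2
        _ ≤ t • G z + (1 - t) • G xs - t * (1 - t) * (M / 2 * ‖z - xs‖ ^ 2) := h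
        _ = t * G z + (1 - t) * G xs - t * (1 - t) * (M / 2 * ‖z - xs‖ ^ 2) := by
            simp [smul_eq_mul]
    have h4 : t * ((1 - t) * c) ≤ t * (G z - G xs) := by rw [hc]; nlinarith
    exact le_of_mul_le_mul_left h4 ht0
  have hlim : Tendsto (fun m : ℕ => (1 - 1 / (m + 1 : ℝ)) * c) atTop (𝓝 ((1 - 0) * c)) :=
    ((tendsto_const_nhds.sub tendsto_one_div_add_atTop_nhds_zero_nat).mul_const c)
  have hle : (1 - 0) * c ≤ G z - G xs := by
    refine le_of_tendsto hlim (Eventually.of_forall fun m => ?_)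
    refine key _ ?_ ?_
    · positivity
    · have : (1:ℝ) ≤ (m:ℝ) + 1 := by exact_mod_cast Nat.succ_le_succ (Nat.zero_le m)
      rw [div_le_one (by linarith)]
      exact this
  simp only [sub_zero, one_mul] at hle
  linarith

end Aux

section Main

variable {n : ℕ} (S : IRL1 n)

lemma IRL1.base_pos (k : ℕ) (i : Fin n) : 0 < |S.x k i| + S.eps k i := by
  have := S.heps_pos k i
  positivity

lemma IRL1.wpos (k : ℕ) (i : Fin n) : 0 < wfun S.p (S.x k i) (S.eps k i) :=
  mul_pos S.hp0 (Real.rpow_pos_of_pos (S.base_pos k i) _)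

lemma IRL1.l1_convex (k : ℕ) : ConvexOn ℝ Set.univ
    (fun z : EuclideanSpace ℝ (Fin n) =>
      S.lam * ∑ i, wfun S.p (S.x k i) (S.eps k i) * |z i|) := by
  refine ⟨convex_univ, fun u _ v _ a b ha hb hab => ?_⟩
  simp only [smul_eq_mul]
  have hterm : ∀ i : Fin n, wfun S.p (S.x k i) (S.eps k i) * |(a • u + b • v) i|
      ≤ a * (wfun S.p (S.x k i) (S.eps k i) * |u i|)
        + b * (wfun S.p (S.x k i) (S.eps k i) * |v i|) := by
    intro i
    have happ : (a • u + b • v) i = a * u i + b * v i := by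
      simp [PiLp.add_apply, PiLp.smul_apply, smul_eq_mul]
    rw [happ]
    have habs : |a * u i + b * v i| ≤ a * |u i| + b * |v i| := by
      calc |a * u i + b * v i| ≤ |a * u i| + |b * v i| := abs_add_le _ _
        _ = a * |u i| + b * |v i| := by rw [abs_mul, abs_mul, abs_of_nonneg ha, abs_of_nonneg hb]
    have hw := (S.wpos k i).le
    nlinarith [hw, habs, abs_nonneg (a * u i + b * v i)]
  calc S.lam * ∑ i, wfun S.p (S.x k i) (S.eps k i) * |(a • u + b • v) i|
      ≤ S.lam * ∑ i, (a * (wfun S.p (S.x k i) (S.eps k i) * |u i|)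
        + b * (wfun S.p (S.x k i) (S.eps k i) * |v i|)) := by
        apply mul_le_mul_of_nonneg_left _ S.hlam.le
        exact Finset.sum_le_sum fun i _ => hterm i
    _ = a * (S.lam * ∑ i, wfun S.p (S.x k i) (S.eps k i) * |u i|)
        + b * (S.lam * ∑ i, wfun S.p (S.x k i) (S.eps k i) * |v i|) := by
        rw [Finset.sum_add_distrib, ← Finset.mul_sum, ← Finset.mul_sum]
        ring

lemma IRL1.G_strongconvex (k : ℕ) : StrongConvexOn Set.univ S.M (S.G k) := by
  rw [strongConvexOn_iff_convex]
  have heq : (fun z : EuclideanSpace ℝ (Fin n) => S.G k z - S.M / 2 * ‖z‖ ^ 2)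
      = (fun z : EuclideanSpace ℝ (Fin n) => S.Q k z - S.M / 2 * ‖z‖ ^ 2)
        + (fun z : EuclideanSpace ℝ (Fin n) =>
            S.lam * ∑ i, wfun S.p (S.x k i) (S.eps k i) * |z i|) := by
    funext z
    simp only [IRL1.G, Pi.add_apply]
    ring
  rw [heq]
  exact (S.hQ_sconv k).add (S.l1_convex k)

lemma IRL1.feps_step (k : ℕ) :
    S.Feps (S.x (k+1)) (S.eps k)
      ≤ S.Feps (S.x k) (S.eps k) - (S.M - S.Lf / 2) * ‖S.x (k+1) - S.x k‖ ^ 2 := by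
  have hconc : ∀ i : Fin n, (|S.x (k+1) i| + S.eps k i) ^ S.p
      ≤ (|S.x k i| + S.eps k i) ^ S.p
        + wfun S.p (S.x k i) (S.eps k i) * (|S.x (k+1) i| - |S.x k i|) := by
    intro i
    have ha : 0 < |S.x k i| + S.eps k i := S.base_pos k i
    have hy : (0:ℝ) ≤ |S.x (k+1) i| + S.eps k i := by
      have := (S.heps_pos k i).le
      positivity
    have h := rpow_tangent S.hp0 S.hp1 ha hy
    have heq : (|S.x (k+1) i| + S.eps k i) - (|S.x k i| + S.eps k i)
        = |S.x (k+1) i| - |S.x k i| := by ring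
    rw [heq] at h
    calc (|S.x (k+1) i| + S.eps k i) ^ S.p
        ≤ (|S.x k i| + S.eps k i) ^ S.p
          + S.p * (|S.x k i| + S.eps k i) ^ (S.p - 1) * (|S.x (k+1) i| - |S.x k i|) := h
      _ = (|S.x k i| + S.eps k i) ^ S.p
          + wfun S.p (S.x k i) (S.eps k i) * (|S.x (k+1) i| - |S.x k i|) := by
          rw [wfun]
  have hgrowth := strong_min_growth (S.G_strongconvex k) (fun z => S.hmin k z) (S.x k)
  have hdesc := descent_lemma S.hf_diff S.hf_lip (S.x k) (S.x (k+1))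
  have htanQ := strong_tangent_le (S.hQ_sconv k) (S.hQ_diff k) (S.x k) (S.x (k+1))
  rw [S.hQ_grad k] at htanQ
  have hsum : S.lam * ∑ i, (|S.x (k+1) i| + S.eps k i) ^ S.p
      ≤ S.lam * ∑ i, (|S.x k i| + S.eps k i) ^ S.p
        + (S.lam * ∑ i, wfun S.p (S.x k i) (S.eps k i) * |S.x (k+1) i|
          - S.lam * ∑ i, wfun S.p (S.x k i) (S.eps k i) * |S.x k i|) := by
    have h1 : ∑ i, (|S.x (k+1) i| + S.eps k i) ^ S.p
        ≤ ∑ i, ((|S.x k i| + S.eps k i) ^ S.p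
          + wfun S.p (S.x k i) (S.eps k i) * (|S.x (k+1) i| - |S.x k i|)) :=
      Finset.sum_le_sum fun i _ => hconc i
    have h2 : ∑ i, ((|S.x k i| + S.eps k i) ^ S.p
          + wfun S.p (S.x k i) (S.eps k i) * (|S.x (k+1) i| - |S.x k i|))
        = ∑ i, (|S.x k i| + S.eps k i) ^ S.p
          + (∑ i, wfun S.p (S.x k i) (S.eps k i) * |S.x (k+1) i|
            - ∑ i, wfun S.p (S.x k i) (S.eps k i) * |S.x k i|) := by
      rw [Finset.sum_add_distrib, ← Finset.sum_sub_distrib]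
      congr 1
      apply Finset.sum_congr rfl
      intro i _
      ring
    have := mul_le_mul_of_nonneg_left (h1.trans_eq h2) S.hlam.le
    calc S.lam * ∑ i, (|S.x (k+1) i| + S.eps k i) ^ S.p
        ≤ S.lam * (∑ i, (|S.x k i| + S.eps k i) ^ S.p
          + (∑ i, wfun S.p (S.x k i) (S.eps k i) * |S.x (k+1) i|
            - ∑ i, wfun S.p (S.x k i) (S.eps k i) * |S.x k i|)) := this
      _ = _ := by ring
  have hG : S.Q k (S.x (k+1)) + S.lam * ∑ i, wfun S.p (S.x k i) (S.eps k i) * |S.x (k+1) i|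
      + S.M / 2 * ‖S.x (k+1) - S.x k‖ ^ 2
      ≤ S.Q k (S.x k) + S.lam * ∑ i, wfun S.p (S.x k i) (S.eps k i) * |S.x k i| := by
    have hnorm : ‖S.x k - S.x (k+1)‖ = ‖S.x (k+1) - S.x k‖ := norm_sub_rev _ _
    have := hgrowth
    simp only [IRL1.G] at this
    rw [hnorm] at this
    linarith
  simp only [IRL1.Feps]
  nlinarith [hsum, hG, hdesc, htanQ]

lemma IRL1.c_pos : 0 < S.M - S.Lf / 2 := by have := S.hM; linarith

lemma IRL1.feps_next (k : ℕ) :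
    S.Feps (S.x (k+1)) (S.eps (k+1)) ≤ S.Feps (S.x (k+1)) (S.eps k) := by
  simp only [IRL1.Feps]
  have : ∑ i, (|S.x (k+1) i| + S.eps (k+1) i) ^ S.p
      ≤ ∑ i, (|S.x (k+1) i| + S.eps k i) ^ S.p := by
    apply Finset.sum_le_sum
    intro i _
    apply Real.rpow_le_rpow
    · have := (S.heps_pos (k+1) i).le
      positivity
    · have h1 := S.heps_dec k i
      have h2 : S.mu * S.eps k i ≤ S.eps k i := by
        have := (S.heps_pos k i).le
        nlinarith [S.hmu1]
      have : S.eps (k+1) i ≤ S.eps k i := h1.trans h2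
      linarith
    · exact S.hp0.le
  have := mul_le_mul_of_nonneg_left this S.hlam.le
  linarith

lemma IRL1.feps_succ_le (k : ℕ) :
    S.Feps (S.x (k+1)) (S.eps (k+1))
      ≤ S.Feps (S.x k) (S.eps k) - (S.M - S.Lf / 2) * ‖S.x (k+1) - S.x k‖ ^ 2 :=
  (S.feps_next k).trans (S.feps_step k)

lemma IRL1.feps_antitone : Antitone (fun k => S.Feps (S.x k) (S.eps k)) := by
  apply antitone_nat_of_succ_le
  intro k
  have h := S.feps_succ_le k
  have hc := S.c_pos
  nlinarith [norm_nonneg (S.x (k+1) - S.x k), sq_nonneg ‖S.x (k+1) - S.x k‖]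

lemma IRL1.fobj_le_feps (z : EuclideanSpace ℝ (Fin n)) (k : ℕ) :
    S.Fobj z ≤ S.Feps z (S.eps k) := by
  simp only [IRL1.Fobj, IRL1.Feps]
  have : ∑ i, |z i| ^ S.p ≤ ∑ i, (|z i| + S.eps k i) ^ S.p := by
    apply Finset.sum_le_sum
    intro i _
    apply Real.rpow_le_rpow (abs_nonneg _) _ S.hp0.le
    have := (S.heps_pos k i).le
    linarith
  have := mul_le_mul_of_nonneg_left this S.hlam.le
  linarith

lemma IRL1.x_mem_level (k : ℕ) : S.Fobj (S.x k) ≤ S.Feps (S.x 0) (S.eps 0) :=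
  (S.fobj_le_feps (S.x k) k).trans (S.feps_antitone (Nat.zero_le k))

lemma IRL1.exists_R (hbdd : S.LevelBounded) : ∃ R : ℝ, 0 ≤ R ∧ ∀ k, ‖S.x k‖ ≤ R := by
  obtain ⟨r, hr⟩ := (Metric.isBounded_iff_subset_closedBall 0).1 hbdd
  refine ⟨max r 0, le_max_right _ _, fun k => ?_⟩
  have hx : S.x k ∈ Metric.closedBall (0 : EuclideanSpace ℝ (Fin n)) r :=
    hr (S.x_mem_level k)
  rw [Metric.mem_closedBall, dist_zero_right] at hx
  exact hx.trans (le_max_left _ _)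

lemma IRL1.exists_B (hbdd : S.LevelBounded) :
    ∃ B : ℝ, ∀ k, B ≤ S.Feps (S.x k) (S.eps k) := by
  obtain ⟨R, hR0, hR⟩ := S.exists_R hbdd
  obtain ⟨z0, _, hz0⟩ := (isCompact_closedBall (0 : EuclideanSpace ℝ (Fin n)) R).exists_isMinOn
    ⟨0, Metric.mem_closedBall_self hR0⟩ S.hf_diff.continuous.continuousOn
  refine ⟨S.f z0, fun k => ?_⟩
  have h1 : S.f z0 ≤ S.f (S.x k) := by
    have hmem : S.x k ∈ Metric.closedBall (0 : EuclideanSpace ℝ (Fin n)) R := by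
      rw [Metric.mem_closedBall, dist_zero_right]
      exact hR k
    exact hz0 hmem
  have h2 : (0:ℝ) ≤ S.lam * ∑ i, (|S.x k i| + S.eps k i) ^ S.p := by
    apply mul_nonneg S.hlam.le
    apply Finset.sum_nonneg
    intro i _
    exact Real.rpow_nonneg (S.base_pos k i).le _
  simp only [IRL1.Feps]
  linarith

lemma IRL1.d_tendsto (hbdd : S.LevelBounded) :
    Tendsto (fun k => ‖S.x (k+1) - S.x k‖) atTop (𝓝 0) := by
  obtain ⟨B, hB⟩ := S.exists_B hbdd
  set a : ℕ → ℝ := fun k => S.Feps (S.x k) (S.eps k) with ha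
  have hbdd' : BddBelow (Set.range a) := ⟨B, by rintro _ ⟨k, rfl⟩; exact hB k⟩
  have htend : Tendsto a atTop (𝓝 (⨅ k, a k)) :=
    tendsto_atTop_ciInf S.feps_antitone hbdd'
  have hdiff : Tendsto (fun k => a k - a (k+1)) atTop (𝓝 0) := by
    have h2 : Tendsto (fun k => a (k+1)) atTop (𝓝 (⨅ k, a k)) :=
      htend.comp (tendsto_add_atTop_nat 1)
    simpa using htend.sub h2
  have hc := S.c_pos
  have hsq : Tendsto (fun k => ‖S.x (k+1) - S.x k‖ ^ 2) atTop (𝓝 0) := by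
    have hle : ∀ k, (S.M - S.Lf / 2) * ‖S.x (k+1) - S.x k‖ ^ 2 ≤ a k - a (k+1) := by
      intro k
      have := S.feps_succ_le k
      simp only [ha]
      linarith
    have h0 : ∀ k, (0:ℝ) ≤ (S.M - S.Lf / 2) * ‖S.x (k+1) - S.x k‖ ^ 2 := fun k => by positivity
    have hsqueeze : Tendsto (fun k => (S.M - S.Lf / 2) * ‖S.x (k+1) - S.x k‖ ^ 2)
        atTop (𝓝 0) :=
      tendsto_of_tendsto_of_tendsto_of_le_of_le tendsto_const_nhds hdiff
        (fun k => h0 k) (fun k => hle k)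
    have := hsqueeze.const_mul (S.M - S.Lf / 2)⁻¹
    simp only [mul_zero] at this
    convert this using 1
    funext k
    rw [← mul_assoc, inv_mul_cancel₀ hc.ne', one_mul]
  have := hsq.sqrt
  simp only [Real.sqrt_zero] at this
  convert this using 1
  funext k
  rw [Real.sqrt_sq (norm_nonneg _)]

lemma IRL1.eps_le_pow (k : ℕ) (i : Fin n) : S.eps k i ≤ S.mu ^ k * S.eps 0 i := by
  induction k with
  | zero => simp
  | succ k ih =>
    calc S.eps (k+1) i ≤ S.mu * S.eps k i := S.heps_dec k i
      _ ≤ S.mu * (S.mu ^ k * S.eps 0 i) := by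
          exact mul_le_mul_of_nonneg_left ih S.hmu0.le
      _ = S.mu ^ (k+1) * S.eps 0 i := by ring

lemma IRL1.eps_tendsto (i : Fin n) : Tendsto (fun k => S.eps k i) atTop (𝓝 0) := by
  have h1 : Tendsto (fun k : ℕ => S.mu ^ k * S.eps 0 i) atTop (𝓝 0) := by
    have := (tendsto_pow_atTop_nhds_zero_of_lt_one S.hmu0.le S.hmu1).mul_const (S.eps 0 i)
    simpa using this
  exact tendsto_of_tendsto_of_tendsto_of_le_of_le tendsto_const_nhds h1
    (fun k => (S.heps_pos k i).le) (fun k => S.eps_le_pow k i)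

lemma coord_le_norm {m : ℕ} (v : EuclideanSpace ℝ (Fin m)) (i : Fin m) : |v i| ≤ ‖v‖ := by
  rw [EuclideanSpace.norm_eq]
  rw [← Real.sqrt_sq_eq_abs]
  apply Real.sqrt_le_sqrt
  have : |v i| ^ 2 = ‖v i‖ ^ 2 := by rw [Real.norm_eq_abs]
  calc (v i) ^ 2 = ‖v i‖ ^ 2 := by rw [Real.norm_eq_abs, sq_abs]
    _ ≤ ∑ j, ‖v j‖ ^ 2 := by
        exact Finset.single_le_sum (fun j _ => sq_nonneg ‖v j‖) (Finset.mem_univ i)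

lemma IRL1.opt_bound (k : ℕ) (i : Fin n) (h : S.x (k+1) i ≠ 0) :
    S.lam * wfun S.p (S.x k i) (S.eps k i) ≤ ‖gradient (S.Q k) (S.x (k+1))‖ := by
  set u : EuclideanSpace ℝ (Fin n) := S.x (k+1) with hu
  set g := gradient (S.Q k) u with hg
  set w : Fin n → ℝ := fun j => wfun S.p (S.x k j) (S.eps k j) with hw
  have hui : 0 < |u i| := abs_pos.2 h
  set σ : ℝ := if 0 < u i then 1 else -1 with hσ
  have hσabs : |σ| = 1 := by
    rcases le_or_gt (u i) 0 with h1 | h1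
    · simp [hσ, not_lt.2 h1]
    · simp [hσ, h1]
  have huσ : u i = σ * |u i| := by
    rcases lt_or_gt_of_ne h with h1 | h1
    · simp [hσ, not_lt.2 h1.le, abs_of_neg h1]
    · simp [hσ, h1, abs_of_pos h1]
  have key : ∀ t : ℝ, 0 < t → t < |u i| →
      S.lam * w i * t ≤ ‖g‖ * t + S.L / 2 * t ^ 2 := by
    intro t ht0 htui
    set z : EuclideanSpace ℝ (Fin n) := u + EuclideanSpace.single i (-(t * σ)) with hz
    have hzsub : z - u = EuclideanSpace.single i (-(t * σ)) := by
      simp [hz]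
    have hznorm : ‖z - u‖ = t := by
      rw [hzsub, EuclideanSpace.norm_single]
      rw [Real.norm_eq_abs, abs_neg, abs_mul, hσabs, mul_one, abs_of_pos ht0]
    have hz_j : ∀ j : Fin n, j ≠ i → z j = u j := by
      intro j hj
      simp [hz, EuclideanSpace.single_apply, hj]
    have hz_i : z i = σ * (|u i| - t) := by
      have hzi : z i = u i + -(t * σ) := by simp [hz, EuclideanSpace.single_apply]
      rw [hzi]
      linear_combination huσ
    have hz_i_abs : |z i| = |u i| - t := by
      rw [hz_i, abs_mul, hσabs, one_mul, abs_of_pos (by linarith)]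
    have hsum : ∑ j, w j * |z j| = (∑ j, w j * |u j|) - w i * t := by
      have h1 : ∑ j, (w j * |z j| - w j * |u j|) = w i * |z i| - w i * |u i| := by
        apply Finset.sum_eq_single_of_mem i (Finset.mem_univ i)
        intro j _ hj
        rw [hz_j j hj]
        ring
      rw [Finset.sum_sub_distrib] at h1
      rw [hz_i_abs] at h1
      have : w i * (|u i| - t) - w i * |u i| = -(w i * t) := by ring
      rw [this] at h1
      linarith
    have hmin := S.hmin k z
    have hminw : S.Q k u + S.lam * ∑ j, w j * |u j|
        ≤ S.Q k z + S.lam * ((∑ j, w j * |u j|) - w i * t) := by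
      rw [← hsum]
      exact hmin
    have hdesc := descent_lemma (S.hQ_diff k) (S.hQ_lip k) u z
    have hinner : @inner ℝ _ _ (gradient (S.Q k) u) (z - u) ≤ ‖g‖ * t := by
      calc @inner ℝ _ _ (gradient (S.Q k) u) (z - u)
          ≤ ‖gradient (S.Q k) u‖ * ‖z - u‖ := real_inner_le_norm _ _
        _ = ‖g‖ * t := by rw [← hg, hznorm]
      
    rw [hznorm] at hdesc
    nlinarith [hminw, hdesc, hinner]
  -- take t → 0
  apply le_of_forall_pos_le_add
  intro δ hδ
  set t : ℝ := min (|u i| / 2) (δ / (|S.L| / 2 + 1)) with ht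
  have hL1 : (0:ℝ) < |S.L| / 2 + 1 := by positivity
  have ht0 : 0 < t := lt_min (by linarith) (by positivity)
  have htui : t < |u i| := (min_le_left _ _).trans_lt (by linarith)
  have hkey := key t ht0 htui
  have hLt : S.L / 2 * t ≤ δ := by
    have h1 : S.L / 2 * t ≤ (|S.L| / 2 + 1) * t := by
      apply mul_le_mul_of_nonneg_right _ ht0.le
      have := le_abs_self S.L
      linarith
    have h2 : t ≤ δ / (|S.L| / 2 + 1) := min_le_right _ _
    have h3 : (|S.L| / 2 + 1) * t ≤ δ := by
      rw [← le_div_iff₀' hL1]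
      exact h2
    linarith
  have hdiv : S.lam * w i ≤ ‖g‖ + S.L / 2 * t := by
    have h1 : S.lam * w i * t ≤ (‖g‖ + S.L / 2 * t) * t := by
      calc S.lam * w i * t ≤ ‖g‖ * t + S.L / 2 * t ^ 2 := hkey
        _ = (‖g‖ + S.L / 2 * t) * t := by ring
    exact le_of_mul_le_mul_right h1 ht0
  calc S.lam * w i ≤ ‖g‖ + S.L / 2 * t := hdiv
    _ ≤ ‖g‖ + δ := by linarith

lemma IRL1.grad_bound (hbdd : S.LevelBounded) :
    ∃ C : ℝ, ∀ k, ‖gradient (S.Q k) (S.x (k+1))‖ ≤ C := by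
  obtain ⟨R, hR0, hR⟩ := S.exists_R hbdd
  refine ⟨|S.L| * (2 * R) + (S.Lf * R + ‖gradient S.f 0‖), fun k => ?_⟩
  have h1 : ‖gradient (S.Q k) (S.x (k+1))‖
      ≤ ‖gradient (S.Q k) (S.x (k+1)) - gradient (S.Q k) (S.x k)‖
        + ‖gradient (S.Q k) (S.x k)‖ := by
      calc ‖gradient (S.Q k) (S.x (k+1))‖
          = ‖(gradient (S.Q k) (S.x (k+1)) - gradient (S.Q k) (S.x k))
            + gradient (S.Q k) (S.x k)‖ := by rw [sub_add_cancel]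
        _ ≤ _ := norm_add_le _ _
  have h2 : ‖gradient (S.Q k) (S.x (k+1)) - gradient (S.Q k) (S.x k)‖
      ≤ |S.L| * (2 * R) := by
    calc ‖gradient (S.Q k) (S.x (k+1)) - gradient (S.Q k) (S.x k)‖
        ≤ S.L * ‖S.x (k+1) - S.x k‖ := S.hQ_lip k _ _
      _ ≤ |S.L| * ‖S.x (k+1) - S.x k‖ :=
          mul_le_mul_of_nonneg_right (le_abs_self _) (norm_nonneg _)
      _ ≤ |S.L| * (2 * R) := by
          apply mul_le_mul_of_nonneg_left _ (abs_nonneg _)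
          calc ‖S.x (k+1) - S.x k‖ ≤ ‖S.x (k+1)‖ + ‖S.x k‖ := norm_sub_le _ _
            _ ≤ 2 * R := by have := hR (k+1); have := hR k; linarith
  have h3 : ‖gradient (S.Q k) (S.x k)‖ ≤ S.Lf * R + ‖gradient S.f 0‖ := by
    rw [S.hQ_grad k]
    calc ‖gradient S.f (S.x k)‖
        ≤ ‖gradient S.f (S.x k) - gradient S.f 0‖ + ‖gradient S.f 0‖ := by
          calc ‖gradient S.f (S.x k)‖
              = ‖(gradient S.f (S.x k) - gradient S.f 0) + gradient S.f 0‖ := by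
                rw [sub_add_cancel]
            _ ≤ _ := norm_add_le _ _
      _ ≤ S.Lf * R + ‖gradient S.f 0‖ := by
          have h4 := S.hf_lip (S.x k) 0
          rw [sub_zero] at h4
          have h5 : S.Lf * ‖S.x k‖ ≤ S.Lf * R :=
            mul_le_mul_of_nonneg_left (hR k) S.hLf
          linarith
  linarith

lemma IRL1.exists_delta (hbdd : S.LevelBounded) :
    ∃ δ : ℝ, 0 < δ ∧ ∀ k i, S.x (k+1) i ≠ 0 → δ ≤ |S.x k i| + S.eps k i := by
  obtain ⟨C, hC⟩ := S.grad_bound hbdd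
  set C1 : ℝ := max C 0 + 1 with hC1
  have hC1pos : 0 < C1 := by
    have := le_max_right C 0
    simp only [hC1]
    linarith
  set δ : ℝ := (S.lam * S.p / C1) ^ (1 / (1 - S.p)) with hδ
  have hlp : 0 < S.lam * S.p := mul_pos S.hlam S.hp0
  have hδpos : 0 < δ := Real.rpow_pos_of_pos (div_pos hlp hC1pos) _
  refine ⟨δ, hδpos, fun k i h => ?_⟩
  set s : ℝ := |S.x k i| + S.eps k i with hs
  have hspos : 0 < s := S.base_pos k i
  have h1 : S.lam * S.p * s ^ (S.p - 1) ≤ C1 := by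
    have h2 := S.opt_bound k i h
    have h3 : S.lam * wfun S.p (S.x k i) (S.eps k i) = S.lam * S.p * s ^ (S.p - 1) := by
      rw [wfun, hs]
      ring
    rw [h3] at h2
    calc S.lam * S.p * s ^ (S.p - 1) ≤ ‖gradient (S.Q k) (S.x (k+1))‖ := h2
      _ ≤ C := hC k
      _ ≤ C1 := by
          have := le_max_left C 0
          simp only [hC1]
          linarith
  have hA : 0 < s ^ (1 - S.p) := Real.rpow_pos_of_pos hspos _
  have h2 : s ^ (S.p - 1) = (s ^ (1 - S.p))⁻¹ := by
    rw [show S.p - 1 = -(1 - S.p) by ring, Real.rpow_neg hspos.le]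
  rw [h2] at h1
  have h3 : S.lam * S.p / C1 ≤ s ^ (1 - S.p) := by
    rw [div_le_iff₀ hC1pos]
    have h4 := mul_le_mul_of_nonneg_right h1 hA.le
    rw [mul_assoc, inv_mul_cancel₀ hA.ne', mul_one] at h4
    linarith [h4]
  have h5 : δ ≤ (s ^ (1 - S.p)) ^ (1 / (1 - S.p)) := by
    rw [hδ]
    have h1p : (0:ℝ) < 1 - S.p := by have := S.hp1; linarith
    exact Real.rpow_le_rpow (div_pos hlp hC1pos).le h3 (by positivity)
  have h6 : (s ^ (1 - S.p)) ^ (1 / (1 - S.p)) = s := by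
    have h1p : (0:ℝ) < 1 - S.p := by have := S.hp1; linarith
    rw [← Real.rpow_mul hspos.le, mul_one_div, div_self h1p.ne']
    exact Real.rpow_one s
  rw [h6] at h5
  exact h5

end Main

/-- In the IRL1 setting with bounded level set, there are disjoint
index sets `I*` and `A*` with `I* ∪ A* = {1,…,n}` and `k̄` such that for all
`k > k̄`, `{i : x_i^k ≠ 0} = I*` and `{i : x_i^k = 0} = A*`. -/
theorem stmt8 {n : ℕ} (S : IRL1 n) (hbdd : S.LevelBounded) :
    ∃ (Istar Astar : Set (Fin n)), Disjoint Istar Astar ∧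
      Istar ∪ Astar = Set.univ ∧
      ∃ kbar : ℕ, ∀ k > kbar,
        {i : Fin n | S.x k i ≠ 0} = Istar ∧ {i : Fin n | S.x k i = 0} = Astar := by
  obtain ⟨δ, hδ, hkey⟩ := S.exists_delta hbdd
  have h1 : ∀ᶠ k in atTop, ∀ i : Fin n, S.eps k i < δ / 4 := by
    rw [eventually_all]
    intro i
    exact (S.eps_tendsto i).eventually_lt_const (by linarith)
  have h2 : ∀ᶠ k in atTop, ‖S.x (k+1) - S.x k‖ < δ / 4 :=
    (S.d_tendsto hbdd).eventually_lt_const (by linarith)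
  obtain ⟨K, hK⟩ := Filter.eventually_atTop.1 (h1.and h2)
  have hcoord : ∀ k (i : Fin n), |S.x (k+1) i - S.x k i| ≤ ‖S.x (k+1) - S.x k‖ := by
    intro k i
    have := coord_le_norm (S.x (k+1) - S.x k) i
    simpa using this
  have step1 : ∀ k, K ≤ k → ∀ i : Fin n, S.x (k+1) i ≠ 0 → δ / 2 ≤ |S.x (k+1) i| := by
    intro k hk i hne
    have hkey' := hkey k i hne
    have heps := (hK k hk).1 i
    have hd := (hK k hk).2
    have hci := (hcoord k i).trans_lt hd
    have h3 : 3 * δ / 4 ≤ |S.x k i| := by linarith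
    have h4 : |S.x k i| - |S.x (k+1) i - S.x k i| ≤ |S.x (k+1) i| := by
      have h5 := abs_sub_abs_le_abs_sub (S.x k i) (S.x (k+1) i)
      rw [abs_sub_comm] at h5
      linarith
    linarith
  have step2 : ∀ k, K + 1 ≤ k → ∀ i : Fin n, (S.x (k+1) i ≠ 0 ↔ S.x k i ≠ 0) := by
    intro k hk i
    constructor
    · intro hne
      have hkey' := hkey k i hne
      have heps := (hK k (by omega)).1 i
      have : 0 < |S.x k i| := by linarith
      exact abs_pos.1 this
    · intro hne
      obtain ⟨m, rfl⟩ : ∃ m, k = m + 1 := ⟨k - 1, by omega⟩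
      have h5 := step1 m (by omega) i hne
      have hd := (hK (m+1) (by omega)).2
      have hci := (hcoord (m+1) i).trans_lt hd
      have h6 : |S.x (m+1) i| - |S.x (m+1+1) i - S.x (m+1) i| ≤ |S.x (m+1+1) i| := by
        have h7 := abs_sub_abs_le_abs_sub (S.x (m+1) i) (S.x (m+1+1) i)
        rw [abs_sub_comm] at h7
        linarith
      have : 0 < |S.x (m+1+1) i| := by linarith
      exact abs_pos.1 this
  have hconst : ∀ k, K + 2 ≤ k → {i : Fin n | S.x k i ≠ 0} = {i : Fin n | S.x (K+2) i ≠ 0} := by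
    intro k hk
    induction k, hk using Nat.le_induction with
    | base => rfl
    | succ k hk ih =>
      rw [← ih]
      ext i
      simp only [Set.mem_setOf_eq]
      exact step2 k (by omega) i
  refine ⟨{i : Fin n | S.x (K+2) i ≠ 0}, {i : Fin n | S.x (K+2) i ≠ 0}ᶜ,
    disjoint_compl_right, Set.union_compl_self _, K+1, ?_⟩
  intro k hk
  have hk2 : K + 2 ≤ k := by omega
  have hmem : ∀ i : Fin n, (S.x k i ≠ 0) ↔ (S.x (K+2) i ≠ 0) := by
    intro i
    exact Set.ext_iff.1 (hconst k hk2) i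
  constructor
  · exact hconst k hk2
  · ext i
    simp only [Set.mem_setOf_eq, Set.mem_compl_iff]
    rw [← hmem i]
    tauto
end
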